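/- Let x_1, …, x_r be distinct real algebraic integers such that, for each i, the minimal polynomial of x_i over ℤ has a complex root that does not belong to the set {x_1, …, x_r}. Then the set { (Q(x_1), …, Q(x_r)) : Q a polynomial with integer coefficients } is dense in ℝ^r. -/

import Mathlib

open Polynomial

open Module

lemma line_in_closed_subgroup {E : Type*} [NormedAddCommGroup E] [NormedSpace ℝ E]
    [FiniteDimensional ℝ E] (K : AddSubgroup E) (hK : IsClosed (K : Set E))
    (h : ∀ ε : ℝ, 0 < ε → ∃ g ∈ K, g ≠ 0 ∧ ‖g‖ < ε) :
    ∃ v : E, ‖v‖ = 1 ∧ ∀ t : ℝ, t • v ∈ K := by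
  choose g hgK hg0 hgn using fun n : ℕ => h (1 / (n + 1)) (by positivity)
  have hgnorm : ∀ n, (0 : ℝ) < ‖g n‖ := fun n => norm_pos_iff.mpr (hg0 n)
  set u : ℕ → E := fun n => ‖g n‖⁻¹ • g n with hu
  have husphere : ∀ n, u n ∈ Metric.sphere (0 : E) 1 := by
    intro n
    simp [u, norm_smul, abs_of_pos (inv_pos.mpr (hgnorm n)),
      inv_mul_cancel₀ (hgnorm n).ne']
  obtain ⟨v, hv, ψ, hψ, hconv⟩ := (isCompact_sphere (0 : E) 1).tendsto_subseq husphere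
  refine ⟨v, by simpa using hv, fun t => ?_⟩
  have hgψ : Filter.Tendsto (fun n => ‖g (ψ n)‖) Filter.atTop (nhds 0) := by
    have key : ∀ n : ℕ, ‖g (ψ n)‖ ≤ 1 / (n + 1) := by
      intro n
      have h1 : (n : ℝ) + 1 ≤ (ψ n : ℝ) + 1 := by
        have h2 : (n : ℝ) ≤ (ψ n : ℝ) := by exact_mod_cast hψ.le_apply
        linarith
      exact (hgn (ψ n)).le.trans (one_div_le_one_div_of_le (by positivity) h1)
    exact squeeze_zero (fun n => (hgnorm _).le) key tendsto_one_div_add_atTop_nhds_zero_nat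
  set s : ℕ → ℝ := fun n => (⌊t / ‖g (ψ n)‖⌋ : ℝ) * ‖g (ψ n)‖ with hs
  have hst : Filter.Tendsto s Filter.atTop (nhds t) := by
    have hbound : ∀ n, ‖s n - t‖ ≤ ‖g (ψ n)‖ := by
      intro n
      show ‖(⌊t / ‖g (ψ n)‖⌋ : ℝ) * ‖g (ψ n)‖ - t‖ ≤ ‖g (ψ n)‖
      set ε := ‖g (ψ n)‖ with hεdef
      have hε : (0 : ℝ) < ε := hgnorm _
      have h1 : (⌊t / ε⌋ : ℝ) ≤ t / ε := Int.floor_le _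
      have h2 : t / ε - 1 < ⌊t / ε⌋ := by
        have := Int.lt_floor_add_one (t / ε); linarith
      have ht : t / ε * ε = t := div_mul_cancel₀ t hε.ne'
      rw [Real.norm_eq_abs, abs_le]
      constructor
      · nlinarith [mul_le_mul_of_nonneg_right h2.le hε.le]
      · nlinarith [mul_le_mul_of_nonneg_right h1 hε.le]
    have h0 : Filter.Tendsto (fun n => s n - t) Filter.atTop (nhds 0) :=
      squeeze_zero_norm hbound hgψ
    have := h0.add_const t
    simpa using this
  have hmem : ∀ n, s n • u (ψ n) ∈ K := by
    intro n
    have : s n • u (ψ n) = ⌊t / ‖g (ψ n)‖⌋ • g (ψ n) := by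
      rw [hu, smul_smul, hs]
      rw [mul_assoc, mul_inv_cancel₀ (hgnorm (ψ n)).ne', mul_one, Int.cast_smul_eq_zsmul]
    rw [this]
    exact AddSubgroup.zsmul_mem K (hgK _) _
  have hlim : Filter.Tendsto (fun n => s n • u (ψ n)) Filter.atTop (nhds (t • v)) :=
    hst.smul hconv
  exact hK.mem_of_tendsto hlim (Filter.Eventually.of_forall hmem)

theorem exists_int_functional : ∀ (n : ℕ) (E : Type) [NormedAddCommGroup E] [NormedSpace ℝ E]
    [FiniteDimensional ℝ E], finrank ℝ E = n → ∀ H : AddSubgroup E, ¬ Dense (H : Set E) →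
    ∃ φ : E →ₗ[ℝ] ℝ, φ ≠ 0 ∧ ∀ g ∈ H, ∃ m : ℤ, φ g = (m : ℝ) := by
  intro n
  induction n using Nat.strong_induction_on with
  | _ n ih =>
  intro E _ _ _ hrank H hH
  rcases Nat.eq_zero_or_pos n with h0 | hpos
  · exfalso
    apply hH
    have hsub : Subsingleton E := by
      rw [h0] at hrank
      exact finrank_zero_iff.mp hrank
    have : (H : Set E) = Set.univ :=
      Set.eq_univ_of_forall (fun y => by rw [Subsingleton.elim y 0]; exact H.zero_mem)
    rw [this]; exact dense_univ
  set K := H.topologicalClosure with hKdef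
  have hKcl : IsClosed (K : Set E) := AddSubgroup.isClosed_topologicalClosure H
  have hHK : ∀ g ∈ H, g ∈ K := fun g hg => AddSubgroup.le_topologicalClosure H hg
  have hKnd : ¬ Dense (K : Set E) := by
    intro h
    apply hH
    rw [dense_iff_closure_eq] at h ⊢
    rwa [AddSubgroup.topologicalClosure_coe, closure_closure] at h
  by_cases hdisc : ∃ ε : ℝ, 0 < ε ∧ ∀ g ∈ K, ‖g‖ < ε → g = 0
  · obtain ⟨ε, hε, hsmall⟩ := hdisc
    set L : Submodule ℤ E := AddSubgroup.toIntSubmodule K with hLdef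
    have hLK : ∀ {z : E}, z ∈ L ↔ z ∈ K := fun {z} => Iff.rfl
    haveI : DiscreteTopology L := by
      rw [discreteTopology_iff_isOpen_singleton_zero, isOpen_induced_iff]
      refine ⟨Metric.ball 0 ε, Metric.isOpen_ball, ?_⟩
      ext y
      simp only [Set.mem_preimage, Metric.mem_ball, dist_zero_right, Set.mem_singleton_iff]
      constructor
      · intro hlt
        exact Subtype.ext (hsmall y.1 (hLK.mp y.2) hlt)
      · intro h
        rw [h]
        simpa using hε
    by_cases hspan : Submodule.span ℝ (L : Set E) = ⊤
    · haveI : IsZLattice ℝ L := ⟨hspan⟩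
      set ι := Module.Free.ChooseBasisIndex ℤ L with hι
      set b : Basis ι ℝ E := Basis.ofZLatticeBasis ℝ L (Module.Free.chooseBasis ℤ L) with hbdef
      have hne : Nonempty ι := by
        rw [← Fintype.card_pos_iff]
        have h1 : finrank ℤ L = finrank ℝ E := ZLattice.rank ℝ L
        have h2 : finrank ℤ L = Fintype.card ι := finrank_eq_card_chooseBasisIndex ℤ L
        omega
      obtain ⟨i⟩ := hne
      refine ⟨b.coord i, ?_, ?_⟩
      · intro hzero
        have h1 : b.coord i (b i) = 1 := by simp
        rw [hzero] at h1
        simpa using h1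
      · intro g hg
        have hgL : g ∈ Submodule.span ℤ (Set.range (b : ι → E)) := by
          rw [hbdef, Basis.ofZLatticeBasis_span ℝ]
          exact hLK.mpr (hHK g hg)
        obtain ⟨m, hm⟩ := (b.mem_span_iff_repr_mem ℤ g).mp hgL i
        exact ⟨m, by rw [Basis.coord_apply, ← hm]; rfl⟩
    · obtain ⟨f, hf0, hf⟩ := (Submodule.span ℝ (L : Set E)).exists_dual_map_eq_bot_of_lt_top
        (lt_top_iff_ne_top.mpr hspan) inferInstance
      refine ⟨f, hf0, fun g hg => ⟨0, ?_⟩⟩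
      have hmem : f g ∈ (Submodule.span ℝ (L : Set E)).map f :=
        Submodule.mem_map_of_mem (Submodule.subset_span (hHK g hg))
      rw [hf] at hmem
      simpa using hmem
  · push_neg at hdisc
    obtain ⟨v, hv1, hvK⟩ := line_in_closed_subgroup K hKcl (fun ε hε => by
      obtain ⟨g, hg, hlt, hne⟩ := hdisc ε hε
      exact ⟨g, hg, hne, hlt⟩)
    have hv0 : v ≠ 0 := by intro h; rw [h] at hv1; simp at hv1
    set S : Submodule ℝ E := Submodule.span ℝ {v} with hSdef
    haveI : IsClosed (S : Set E) := Submodule.closed_of_finiteDimensional S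
    set H' : AddSubgroup (E ⧸ S) := K.map S.mkQ.toAddMonoidHom with hH'def
    have hrankS : finrank ℝ S = 1 := finrank_span_singleton hv0
    have hrankQ : finrank ℝ (E ⧸ S) < n := by
      have := Submodule.finrank_quotient_add_finrank S
      omega
    have hSK : ∀ y ∈ S, y ∈ K := by
      intro y hy
      obtain ⟨a, rfl⟩ := Submodule.mem_span_singleton.mp hy
      exact hvK a
    have hH'nd : ¬ Dense (H' : Set (E ⧸ S)) := by
      intro hd
      apply hKnd
      rw [Metric.dense_iff]
      intro y r hr
      obtain ⟨w, hw1, hw2⟩ := Metric.dense_iff.mp hd (S.mkQ y) (r / 2) (by linarith)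
      obtain ⟨h, hh, rfl⟩ := hw2
      have hw1' := Metric.mem_ball.mp hw1
      have hdist : ‖S.mkQ (y - h)‖ < r / 2 := by
        rw [map_sub, ← dist_eq_norm, dist_comm]
        exact hw1'
      have hpos2 : (0 : ℝ) < r / 2 - ‖S.mkQ (y - h)‖ := by linarith
      obtain ⟨m, hm1, hm2⟩ := Submodule.Quotient.norm_mk_lt (S.mkQ (y - h)) hpos2
      have hmnorm : ‖m‖ < r / 2 := by linarith [hm2]
      have hmS : y - h - m ∈ S := by
        rw [← Submodule.Quotient.eq]
        exact hm1.symm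
      refine ⟨h + (y - h - m), ?_, K.add_mem hh (hSK _ hmS)⟩
      rw [Metric.mem_ball, dist_eq_norm]
      have heq : h + (y - h - m) - y = -m := by abel
      rw [heq, norm_neg]
      linarith
    obtain ⟨ψ, hψ0, hψint⟩ := ih _ hrankQ (E ⧸ S) rfl H' hH'nd
    refine ⟨ψ.comp S.mkQ, ?_, ?_⟩
    · intro hzero
      apply hψ0
      ext y
      simpa using congrFun (congrArg DFunLike.coe hzero) y
    · intro g hg
      exact hψint _ (AddSubgroup.mem_map_of_mem _ (hHK g hg))

lemma coeff_vanish_of_conj {r : ℕ} (x : Fin r → ℝ) (hinj : Function.Injective x)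
    (hint : ∀ i, IsIntegral ℤ (x i)) (c : Fin r → ℝ)
    (A : ℕ → ℤ) (hA : ∀ n : ℕ, ∑ i, x i ^ n * c i = (A n : ℝ))
    (i0 : Fin r) (z : ℂ) (hz0 : Polynomial.aeval z (minpoly ℤ (x i0)) = 0)
    (hzx : ∀ j, z ≠ (x j : ℂ)) : c i0 = 0 := by
  classical
  have hintQ : ∀ i, IsIntegral ℚ (x i) := fun i => (hint i).tower_top
  set s : Finset ℚ[X] := Finset.image (fun i => minpoly ℚ (x i)) Finset.univ with hs
  set P : ℚ[X] := ∏ p ∈ s, p with hP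
  have hP0 : P ≠ 0 := Finset.prod_ne_zero_iff.mpr (by
    rintro p hp
    obtain ⟨i, _, rfl⟩ := Finset.mem_image.mp hp
    exact minpoly.ne_zero (hintQ i))
  have hdvd : ∀ i, minpoly ℚ (x i) ∣ P := fun i =>
    Finset.dvd_prod_of_mem _ (Finset.mem_image_of_mem _ (Finset.mem_univ i))
  have hxrootR : ∀ i, Polynomial.aeval ((x i : ℂ)) (minpoly ℚ (x i)) = 0 := by
    intro i
    have h := Polynomial.aeval_algebraMap_apply ℂ (x i) (minpoly ℚ (x i))
    rw [minpoly.aeval, map_zero] at h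
    simpa using h
  have hxroot : ∀ i, Polynomial.aeval ((x i : ℂ)) P = 0 := by
    intro i
    obtain ⟨q, hq⟩ := hdvd i
    rw [hq, map_mul, hxrootR i, zero_mul]
  have hzQ : Polynomial.aeval z (minpoly ℚ (x i0)) = 0 := by
    rw [minpoly.isIntegrallyClosed_eq_field_fractions' ℚ (hint i0)]
    rwa [Polynomial.aeval_map_algebraMap]
  -- splitting field
  set L := P.SplittingField with hL
  haveI : FiniteDimensional ℚ L := inferInstanceAs (FiniteDimensional ℚ P.SplittingField)
  haveI : Algebra.IsIntegral ℚ L := Algebra.IsIntegral.of_finite ℚ L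
  have j : L →ₐ[ℚ] ℂ := IsAlgClosed.lift
  have hjinj : Function.Injective j := j.toRingHom.injective
  -- root enumeration
  set N := Fintype.card (P.rootSet L) with hN
  set e : Fin N ≃ P.rootSet L := (Fintype.equivFin (P.rootSet L)).symm with he
  set ξ : Fin N → L := fun k => (e k : L) with hξ
  have hξinj : Function.Injective ξ := fun a b hab => e.injective (Subtype.ext hab)
  have hξroot : ∀ k, ξ k ∈ P.rootSet L := fun k => (e k).2
  set ρ : Fin N → ℂ := fun k => j (ξ k) with hρ
  have hρinj : Function.Injective ρ := fun a b hab => hξinj (hjinj hab)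
  have hρrange : Set.range ρ = P.rootSet ℂ := by
    have h1 : j '' (P.rootSet L) = P.rootSet ℂ :=
      (Polynomial.SplittingField.splits P).image_rootSet j
    have h2 : Set.range ξ = (P.rootSet L : Set L) := by
      rw [hξ]
      ext y
      constructor
      · rintro ⟨k, rfl⟩; exact (e k).2
      · intro hy; exact ⟨e.symm ⟨y, hy⟩, by simp⟩
    rw [← h1, ← h2]
    ext w
    constructor
    · rintro ⟨k, rfl⟩; exact ⟨ξ k, ⟨k, rfl⟩, rfl⟩
    · rintro ⟨l, ⟨k, rfl⟩, rfl⟩; exact ⟨k, rfl⟩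
  -- linear system over L
  set M : Matrix (Fin N) (Fin N) L := Matrix.vandermonde ξ with hM
  have hMdet : IsUnit M.det :=
    isUnit_iff_ne_zero.mpr (Matrix.det_vandermonde_ne_zero_iff.mpr hξinj)
  set a : Fin N → L := fun n => ((A n : ℤ) : L) with ha
  set γ : Fin N → L := Matrix.vecMul a M⁻¹ with hγ
  have hγsol : Matrix.vecMul γ M = a := by
    rw [hγ, Matrix.vecMul_vecMul, Matrix.nonsing_inv_mul M hMdet, Matrix.vecMul_one]
  have hpush : ∀ (τ : L →ₐ[ℚ] ℂ) (nn : Fin N),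
      ∑ k, τ (γ k) * τ (ξ k) ^ (nn : ℕ) = ((A nn : ℤ) : ℂ) := by
    intro τ nn
    have h1 := congrFun hγsol nn
    have h2 : Matrix.vecMul γ M nn = ∑ k, γ k * ξ k ^ (nn : ℕ) := by
      simp [Matrix.vecMul, dotProduct, hM, Matrix.vandermonde_apply]
    rw [h2] at h1
    have h3 := congrArg τ h1
    rw [map_sum] at h3
    simp only [map_mul, map_pow] at h3
    rw [h3, ha]
    push_cast
    exact map_intCast τ _
  -- uniqueness over ℂ
  set Mc : Matrix (Fin N) (Fin N) ℂ := Matrix.vandermonde ρ with hMc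
  have hMcdet : IsUnit Mc.det :=
    isUnit_iff_ne_zero.mpr (Matrix.det_vandermonde_ne_zero_iff.mpr hρinj)
  set cext : Fin N → ℂ := fun k => ∑ i, if (x i : ℂ) = ρ k then (c i : ℂ) else 0 with hcext
  have hxmem : ∀ i, (x i : ℂ) ∈ P.rootSet ℂ := fun i =>
    Polynomial.mem_rootSet.mpr ⟨hP0, hxroot i⟩
  have hkx : ∀ i, ∃ k, ρ k = (x i : ℂ) := by
    intro i
    have := hxmem i
    rw [← hρrange] at this
    exact this
  choose kx hkxs using hkx
  have hcextsol : ∀ nn : Fin N, Matrix.vecMul cext Mc nn = ((A nn : ℤ) : ℂ) := by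
    intro nn
    have h2 : Matrix.vecMul cext Mc nn = ∑ k, cext k * ρ k ^ (nn : ℕ) := by
      simp [Matrix.vecMul, dotProduct, hMc, Matrix.vandermonde_apply]
    rw [h2, hcext]
    simp only [Finset.sum_mul]
    rw [Finset.sum_comm]
    have h3 : ∀ i : Fin r, (∑ k : Fin N, (if (x i : ℂ) = ρ k then (c i : ℂ) else 0) * ρ k ^ (nn : ℕ))
        = (c i : ℂ) * (x i : ℂ) ^ (nn : ℕ) := by
      intro i
      rw [Finset.sum_eq_single (kx i)]
      · rw [if_pos (hkxs i).symm, hkxs i]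
      · intro k _ hk
        rw [if_neg, zero_mul]
        intro hEq
        exact hk (hρinj (by rw [hkxs i, ← hEq]))
      · intro hmem; exact absurd (Finset.mem_univ _) hmem
    rw [Finset.sum_congr rfl (fun i _ => h3 i)]
    have h4 := hA (nn : ℕ)
    have h5 := congrArg (fun t : ℝ => (t : ℂ)) h4
    push_cast at h5 ⊢
    rw [← h5]
    apply Finset.sum_congr rfl
    intro i _
    ring
  have huniq2 : ∀ w : Fin N → ℂ, (∀ nn, Matrix.vecMul w Mc nn = ((A nn : ℤ) : ℂ)) → w = cext := by
    intro w hw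
    have hww : Matrix.vecMul w Mc = Matrix.vecMul cext Mc :=
      funext fun nn => by rw [hw nn, hcextsol nn]
    have := congrArg (fun vv => Matrix.vecMul vv Mc⁻¹) hww
    simpa [Matrix.vecMul_vecMul, Matrix.mul_nonsing_inv Mc hMcdet, Matrix.vecMul_one] using this
  -- the embedding j gives cext
  have hjγ : (fun k => j (γ k)) = cext := by
    apply huniq2
    intro nn
    have h2 : Matrix.vecMul (fun k => j (γ k)) Mc nn = ∑ k, j (γ k) * ρ k ^ (nn : ℕ) := by
      simp [Matrix.vecMul, dotProduct, hMc, Matrix.vandermonde_apply]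
    rw [h2]
    exact hpush j nn
  -- the twisted embedding σ
  have hsplits : ∀ sEl : L, IsIntegral ℚ sEl ∧ ((minpoly ℚ sEl).map (algebraMap ℚ ℂ)).Splits :=
    fun sEl => ⟨Algebra.IsIntegral.isIntegral sEl, IsAlgClosed.splits _⟩
  have hminξ : minpoly ℚ (ξ (kx i0)) = minpoly ℚ (x i0) := by
    have h1 := minpoly.algHom_eq j hjinj (ξ (kx i0))
    have h2 : j (ξ (kx i0)) = ((x i0 : ℝ) : ℂ) := hkxs i0
    have h3 := minpoly.algHom_eq (Complex.ofRealAm.restrictScalars ℚ)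
      (fun a b hab => Complex.ofReal_injective hab) (x i0)
    rw [← h1, h2, ← h3]
    rfl
  obtain ⟨σ, hσ⟩ := IntermediateField.exists_algHom_of_splits_of_aeval (F := ℚ) (E := L)
    (K := ℂ) hsplits (by rw [hminξ]; exact hzQ)
  have hσinj : Function.Injective σ := σ.toRingHom.injective
  have hσroot : ∀ k, ∃ k', ρ k' = σ (ξ k) := by
    intro k
    have h1 : σ (ξ k) ∈ P.rootSet ℂ := by
      apply Polynomial.mem_rootSet.mpr
      refine ⟨hP0, ?_⟩
      rw [Polynomial.aeval_algHom_apply, (Polynomial.mem_rootSet.mp (hξroot k)).2, map_zero]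
    rw [← hρrange] at h1
    exact h1
  choose gg hgg using hσroot
  have hgginj : Function.Injective gg := by
    intro p q hpq
    apply hξinj
    apply hσinj
    rw [← hgg p, ← hgg q, hpq]
  set π := Equiv.ofBijective gg (Finite.injective_iff_bijective.mp hgginj) with hπ
  have hwsol : ∀ nn : Fin N, Matrix.vecMul ((fun k => σ (γ k)) ∘ π.symm) Mc nn
      = ((A nn : ℤ) : ℂ) := by
    intro nn
    have h2 : Matrix.vecMul ((fun k => σ (γ k)) ∘ π.symm) Mc nn
        = ∑ k, σ (γ (π.symm k)) * ρ k ^ (nn : ℕ) := by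
      simp [Matrix.vecMul, dotProduct, hMc, Matrix.vandermonde_apply]
    rw [h2]
    rw [← Equiv.sum_comp π (fun k => σ (γ (π.symm k)) * ρ k ^ (nn : ℕ))]
    have h3 : ∀ k, σ (γ (π.symm (π k))) * ρ (π k) ^ (nn : ℕ)
        = σ (γ k) * σ (ξ k) ^ (nn : ℕ) := by
      intro k
      rw [Equiv.symm_apply_apply]
      congr 1
      rw [show π k = gg k from rfl, hgg]
    rw [Finset.sum_congr rfl (fun k _ => h3 k)]
    exact hpush σ nn
  have hwc : ((fun k => σ (γ k)) ∘ π.symm) = cext := huniq2 _ hwsol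
  have h1 : σ (γ (kx i0)) = cext (π (kx i0)) := by
    have := congrFun hwc (π (kx i0))
    simpa using this
  have h2 : cext (π (kx i0)) = 0 := by
    have hρπ : ρ (π (kx i0)) = z := by
      rw [show π (kx i0) = gg (kx i0) from rfl, hgg, hσ]
    rw [hcext]
    apply Finset.sum_eq_zero
    intro i _
    rw [hρπ, if_neg]
    intro hq
    exact hzx i hq.symm
  have h3 : γ (kx i0) = 0 := by
    apply hσinj
    rw [h1, h2, map_zero]
  have h4 : cext (kx i0) = 0 := by
    rw [← congrFun hjγ (kx i0), h3, map_zero]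
  have h5 : cext (kx i0) = (c i0 : ℂ) := by
    have hrfl : cext (kx i0) = ∑ i, if (x i : ℂ) = ρ (kx i0) then (c i : ℂ) else 0 := rfl
    rw [hrfl, Finset.sum_eq_single i0]
    · rw [if_pos (by rw [hkxs i0])]
    · intro i _ hi
      rw [if_neg]
      intro hq
      rw [hkxs i0] at hq
      exact hi (hinj (Complex.ofReal_inj.mp hq))
    · intro hmem; exact absurd (Finset.mem_univ _) hmem
  rw [h4] at h5
  exact Complex.ofReal_eq_zero.mp h5.symm

/-- Let `x_1, …, x_r` be distinct real algebraic integers such that each of them has a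
(complex) conjugate not in `{x_1, …, x_r}`. Then `{(Q(x_1), …, Q(x_r)) : Q ∈ ℤ[T]}` is
dense in `ℝ^r`. -/
theorem dense_int_poly_values (r : ℕ) (x : Fin r → ℝ)
    (hinj : Function.Injective x)
    (hint : ∀ i, IsIntegral ℤ (x i))
    (hconj : ∀ i, ∃ z : ℂ, Polynomial.aeval z (minpoly ℤ (x i)) = 0 ∧
      ∀ j, z ≠ (x j : ℂ)) :
    Dense (Set.range fun Q : Polynomial ℤ => fun i => (Polynomial.aeval (x i) Q : ℝ)) := by
  classical
  by_contra hnd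
  set f : Polynomial ℤ →+ (Fin r → ℝ) :=
    { toFun := fun Q => fun i => (Polynomial.aeval (x i) Q : ℝ)
      map_zero' := by funext i; simp
      map_add' := by intro Q1 Q2; funext i; simp } with hf
  have hrange : (f.range : Set (Fin r → ℝ))
      = Set.range fun Q : Polynomial ℤ => fun i => (Polynomial.aeval (x i) Q : ℝ) := by
    ext v
    simp only [AddMonoidHom.coe_range, hf, AddMonoidHom.coe_mk, ZeroHom.coe_mk]
  obtain ⟨φ, hφ0, hφint⟩ := exists_int_functional (finrank ℝ (Fin r → ℝ)) (Fin r → ℝ) rfl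
    f.range (by rw [hrange]; exact hnd)
  set c : Fin r → ℝ := fun i => φ (fun j => if i = j then 1 else 0) with hc
  have hφsum : ∀ v : Fin r → ℝ, φ v = ∑ i, v i * c i := by
    intro v
    rw [LinearMap.pi_apply_eq_sum_univ]
    simp [hc, smul_eq_mul]
  have hA : ∀ n : ℕ, ∃ m : ℤ, ∑ i, x i ^ n * c i = (m : ℝ) := by
    intro n
    obtain ⟨m, hm⟩ := hφint (f (Polynomial.X ^ n)) (AddMonoidHom.mem_range.mpr ⟨_, rfl⟩)
    refine ⟨m, ?_⟩
    rw [← hm, hφsum]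
    apply Finset.sum_congr rfl
    intro i _
    have hfx : f (Polynomial.X ^ n) i = x i ^ n := by simp [hf]
    rw [hfx]
  choose A hAs using hA
  have hczero : ∀ i, c i = 0 := by
    intro i
    obtain ⟨z, hz0, hzx⟩ := hconj i
    exact coeff_vanish_of_conj x hinj hint c A hAs i z hz0 hzx
  apply hφ0
  apply LinearMap.ext
  intro v
  rw [hφsum]
  simp [hczero]
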